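/- Let Σ be a linearly ordered alphabet, let u : ℕ → Σ be an infinite word whose first letter is b, and let u' be the shift of u (u with its first letter removed, u'(n) = u(n+1)). If u is lexicographically strictly smaller than u', then the constant infinite word b^ω = bbb··· is lexicographically strictly smaller than u. -/
import Mathlib


/-- Lexicographic order on infinite words `ℕ → α`. -/
def InfLexLt {α : Type*} [LinearOrder α] (u v : ℕ → α) : Prop :=
  ∃ n : ℕ, (∀ m < n, u m = v m) ∧ u n < v n

/-- If an infinite word `u` starting with the letter `b` is lexicographically strictly
smaller than its shift `u'` (given by `u' n = u (n+1)`), then the constant infinite word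
`b^ω` is lexicographically strictly smaller than `u`. -/
theorem const_lt_of_lt_shift {α : Type*} [LinearOrder α]
    (u : ℕ → α) (b : α) (hb : u 0 = b)
    (h : InfLexLt u (fun n => u (n + 1))) :
    InfLexLt (fun _ => b) u := by
  obtain ⟨n, hpre, hlt⟩ := h
  have key : ∀ m ≤ n, u m = b := by
    intro m hm
    induction m with
    | zero => exact hb
    | succ k ih =>
      have hk : u k = u (k+1) := hpre k (lt_of_lt_of_le (Nat.lt_succ_self k) hm)
      rw [← hk]; exact ih (le_trans (Nat.le_succ k) hm)
  refine ⟨n + 1, ?_, ?_⟩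
  · intro m hm
    exact (key m (Nat.lt_succ_iff.mp hm)).symm
  · calc b = u n := (key n le_rfl).symm
      _ < u (n+1) := hlt
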